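/- Let 1 ≤ p < 2, let N and d be positive integers, and let A be a real N×N matrix of rank d with all diagonal entries equal to 1. Then E_p(A) ≥ 2(N−d) / (p^{p/2} · (2−p)^{(2−p)/2}). -/

import Mathlib

open Finset Real Module

private lemma sum_ite_ne' {ι : Type*} [Fintype ι] [DecidableEq ι] (f : ι → ℝ) (j : ι) :
    ∑ k, (if j = k then 0 else f k) = (∑ k, f k) - f j := by
  have h1 : ∑ k, (if j = k then f k else 0) = f j := by
    simp [Finset.sum_ite_eq]
  have h2 : ∀ k, (if j = k then (0:ℝ) else f k) = f k - (if j = k then f k else 0) := by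
    intro k; by_cases h : j = k <;> simp [h]
  simp only [h2, Finset.sum_sub_distrib, h1]

private lemma rpow_add_rpow_le' {a b t : ℝ} (ha : 0 ≤ a) (hb : 0 ≤ b) (ht : 1 ≤ t) :
    a ^ t + b ^ t ≤ (a + b) ^ t := by
  have h := NNReal.add_rpow_le_rpow_add a.toNNReal b.toNNReal ht
  have h2 := NNReal.coe_le_coe.mpr h
  rw [NNReal.coe_add, NNReal.coe_rpow, NNReal.coe_rpow, NNReal.coe_rpow, NNReal.coe_add,
    Real.coe_toNNReal a ha, Real.coe_toNNReal b hb] at h2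
  exact h2

private lemma sum_rpow_le_rpow_sum' {ι : Type*} (s : Finset ι) (f : ι → ℝ)
    (hf : ∀ i ∈ s, 0 ≤ f i) {t : ℝ} (ht : 1 ≤ t) :
    ∑ i ∈ s, f i ^ t ≤ (∑ i ∈ s, f i) ^ t := by
  induction s using Finset.cons_induction with
  | empty => simp [Real.zero_rpow (by positivity : t ≠ 0)]
  | cons a s ha ih =>
    rw [Finset.sum_cons, Finset.sum_cons]
    have h1 : ∑ i ∈ s, f i ^ t ≤ (∑ i ∈ s, f i) ^ t :=
      ih fun i hi => hf i (Finset.mem_cons_of_mem hi)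
    have h2 : f a ^ t + (∑ i ∈ s, f i) ^ t ≤ (f a + ∑ i ∈ s, f i) ^ t :=
      rpow_add_rpow_le' (hf a (Finset.mem_cons_self a s))
        (Finset.sum_nonneg fun i hi => hf i (Finset.mem_cons_of_mem hi)) ht
    linarith

private lemma key_scalar' {p q x : ℝ} (hp1 : 1 < p) (hp2 : p < 2)
    (hq : q * (p - 1) = p) (hx0 : 0 ≤ x) (hx1 : x ≤ 1) :
    (x * (1 - x)) ^ (q/2) ≤ (((2-p)/2) ^ (q/2 - 1) * (p/2) ^ (q/2)) * x := by
  have hp0 : 0 < p := by linarith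
  have h2p : 0 < 2 - p := by linarith
  have hpm1 : 0 < p - 1 := by linarith
  have hq2 : 2 < q := by nlinarith
  rcases eq_or_lt_of_le hx0 with h0 | hx0'
  · rw [← h0]
    norm_num
    rw [Real.zero_rpow (by positivity : q/2 ≠ 0)]
  set w₁ : ℝ := (2-p)/2 with hw₁
  set w₂ : ℝ := p/2 with hw₂
  have hw₁0 : 0 < w₁ := by positivity
  have hw₂0 : 0 < w₂ := by positivity
  have hwsum : w₁ + w₂ = 1 := by rw [hw₁, hw₂]; ring
  have hx1' : 0 ≤ 1 - x := by linarith
  have hamgm : (x / w₁) ^ w₁ * ((1-x) / w₂) ^ w₂ ≤ 1 := by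
    have := Real.geom_mean_le_arith_mean2_weighted hw₁0.le hw₂0.le
      (by positivity : (0:ℝ) ≤ x / w₁) (by positivity : (0:ℝ) ≤ (1-x) / w₂) hwsum
    calc (x / w₁) ^ w₁ * ((1-x) / w₂) ^ w₂ ≤ w₁ * (x / w₁) + w₂ * ((1-x)/w₂) := this
      _ = 1 := by field_simp; ring
  have hq1 : (0:ℝ) ≤ q - 1 := by linarith
  have hpow : ((x / w₁) ^ w₁ * ((1-x) / w₂) ^ w₂) ^ (q-1) ≤ 1 :=
    Real.rpow_le_one (by positivity) hamgm hq1
  have he1 : w₁ * (q - 1) = q/2 - 1 := by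
    field_simp [hw₁]; nlinarith [hq]
  have he2 : w₂ * (q - 1) = q/2 := by
    field_simp [hw₂]; nlinarith [hq]
  have hexp : (x / w₁) ^ (q/2 - 1) * ((1-x) / w₂) ^ (q/2) ≤ 1 := by
    rw [← he1, ← he2]
    calc (x / w₁) ^ (w₁ * (q-1)) * ((1-x) / w₂) ^ (w₂ * (q-1))
        = ((x / w₁) ^ w₁) ^ (q-1) * (((1-x) / w₂) ^ w₂) ^ (q-1) := by
          rw [← Real.rpow_mul (by positivity), ← Real.rpow_mul (by positivity)]
      _ = ((x / w₁) ^ w₁ * ((1-x) / w₂) ^ w₂) ^ (q-1) := by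
          rw [Real.mul_rpow (by positivity) (by positivity)]
      _ ≤ 1 := hpow
  rw [Real.div_rpow hx0 hw₁0.le, Real.div_rpow hx1' hw₂0.le, div_mul_div_comm] at hexp
  have hden : 0 < w₁ ^ (q/2 - 1) * w₂ ^ (q/2) := by positivity
  rw [div_le_one hden] at hexp
  have hmul := mul_le_mul_of_nonneg_right hexp hx0
  calc (x * (1 - x)) ^ (q/2) = x ^ (q/2) * (1-x) ^ (q/2) := Real.mul_rpow hx0 hx1'
    _ = (x ^ (q/2 - 1) * (1-x) ^ (q/2)) * x := by
        rw [show q/2 = (q/2 - 1) + 1 by ring, Real.rpow_add hx0', Real.rpow_one]; ring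
    _ ≤ (w₁ ^ (q/2-1) * w₂ ^ (q/2)) * x := hmul

private lemma eps_beta' {p q : ℝ} (hp1 : 1 < p) (hp2 : p < 2) (hq : q * (p-1) = p) :
    ((2 / (p ^ (p/2) * (2-p) ^ ((2-p)/2))) ^ (1/p)) ^ q
      * (((2-p)/2) ^ (q/2 - 1) * (p/2) ^ (q/2)) = 1 := by
  have hp0 : 0 < p := by linarith
  have h2p : 0 < 2 - p := by linarith
  have hpm1 : 0 < p - 1 := by linarith
  have hc : 0 < p ^ (p/2) * (2-p) ^ ((2-p)/2) := by positivity
  set X : ℝ := ((2 / (p ^ (p/2) * (2-p) ^ ((2-p)/2))) ^ (1/p)) ^ q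
      * (((2-p)/2) ^ (q/2 - 1) * (p/2) ^ (q/2)) with hX
  have hXpos : 0 < X := by positivity
  have hlog : Real.log X = 0 := by
    rw [hX]
    rw [Real.log_mul (by positivity) (by positivity),
        Real.log_mul (by positivity) (by positivity),
        Real.log_rpow (by positivity), Real.log_rpow (by positivity),
        Real.log_rpow (by positivity), Real.log_rpow (by positivity),
        Real.log_div (by norm_num) (ne_of_gt hc),
        Real.log_mul (by positivity) (by positivity),
        Real.log_rpow hp0, Real.log_rpow h2p,
        Real.log_div (ne_of_gt h2p) (by norm_num),
        Real.log_div (ne_of_gt hp0) (by norm_num)]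
    have hqe : q = p/(p-1) := by field_simp; linarith [hq]
    rw [hqe]
    field_simp
    ring
  rcases Real.log_eq_zero.mp hlog with h | h | h
  · exact absurd h (ne_of_gt hXpos)
  · exact h
  · exact absurd h (by nlinarith)

set_option maxHeartbeats 1600000 in
/-- For `1 ≤ p < 2` and any real `N × N` matrix `A` of rank `d` with unit diagonal
entries, `E_p(A) ≥ 2(N-d) / (p^{p/2} (2-p)^{(2-p)/2})`. -/
theorem pFrameEnergy_lower_bound (N d : ℕ) (hN : 0 < N) (hd : 0 < d)
    (p : ℝ) (hp1 : 1 ≤ p) (hp2 : p < 2)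
    (A : Matrix (Fin N) (Fin N) ℝ) (hrank : A.rank = d) (hdiag : ∀ i, A i i = 1) :
    2 * ((N : ℝ) - (d : ℝ)) / (p ^ (p / 2) * (2 - p) ^ ((2 - p) / 2)) ≤
      ∑ i, ∑ j, if i = j then 0 else |A i j| ^ p := by
  classical
  have hdN : d ≤ N := by
    rw [← hrank]
    simpa using A.rank_le_card_width
  have hA_rank : finrank ℝ (LinearMap.ker A.mulVecLin) = N - d := by
    have h1 := LinearMap.finrank_range_add_finrank_ker A.mulVecLin
    have h2 : finrank ℝ (Fin N → ℝ) = N := by simp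
    have h3 : A.rank = finrank ℝ (LinearMap.range A.mulVecLin) := rfl
    omega
  let e : EuclideanSpace ℝ (Fin N) ≃ₗ[ℝ] (Fin N → ℝ) := WithLp.linearEquiv 2 ℝ (Fin N → ℝ)
  let K : Submodule ℝ (EuclideanSpace ℝ (Fin N)) :=
    (LinearMap.ker A.mulVecLin).comap e.toLinearMap
  have hK : finrank ℝ K = N - d := by
    rw [← hA_rank]
    exact LinearEquiv.finrank_eq (e.ofSubmodule' _)
  set m' := finrank ℝ K with hm'
  let B := stdOrthonormalBasis ℝ K
  let v : Fin m' → (Fin N → ℝ) := fun t => e ((B t : EuclideanSpace ℝ (Fin N)))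
  have hv_ker : ∀ t, A.mulVec (v t) = 0 := by
    intro t
    exact (B t).2
  have hv_ortho : ∀ t s, (∑ j, v t j * v s j) = if t = s then 1 else 0 := by
    intro t s
    have h := orthonormal_iff_ite.mp B.orthonormal t s
    rw [Submodule.coe_inner, PiLp.inner_apply] at h
    simpa [RCLike.inner_apply, v, e, mul_comm] using h
  let P : Fin N → Fin N → ℝ := fun j k => ∑ t, v t j * v t k
  have hPsymm : ∀ j k, P k j = P j k := by
    intro j k
    exact Finset.sum_congr rfl fun t _ => mul_comm _ _
  have hPdiag_sum : ∑ j, P j j = (m' : ℝ) := by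
    rw [Finset.sum_comm]
    calc ∑ t, ∑ j, v t j * v t j = ∑ t : Fin m', (1:ℝ) := by
          refine Finset.sum_congr rfl fun t _ => ?_
          simpa using hv_ortho t t
      _ = (m' : ℝ) := by simp
  have hProw : ∀ j, ∑ k, (P j k)^2 = P j j := by
    intro j
    have hstep : ∀ t s, ∑ k, (v t j * v t k) * (v s j * v s k)
        = (v t j * v s j) * (if t = s then 1 else 0) := by
      intro t s
      rw [← hv_ortho t s, Finset.mul_sum]
      exact Finset.sum_congr rfl fun k _ => by ring
    calc ∑ k, (P j k)^2
        = ∑ k, ∑ t, ∑ s, (v t j * v t k) * (v s j * v s k) := by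
          refine Finset.sum_congr rfl fun k _ => ?_
          rw [sq, Finset.sum_mul_sum]
      _ = ∑ t, ∑ s, ∑ k, (v t j * v t k) * (v s j * v s k) := by
          rw [Finset.sum_comm]
          exact Finset.sum_congr rfl fun t _ => Finset.sum_comm
      _ = ∑ t, ∑ s, (v t j * v s j) * (if t = s then 1 else 0) :=
          Finset.sum_congr rfl fun t _ => Finset.sum_congr rfl fun s _ => hstep t s
      _ = ∑ t, v t j * v t j := by
          refine Finset.sum_congr rfl fun t _ => ?_
          rw [Finset.sum_eq_single t]
          · simp
          · intro s _ hs; simp [Ne.symm hs]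
          · intro h; exact absurd (Finset.mem_univ t) h
      _ = P j j := rfl
  have hPdiag_nonneg : ∀ j, 0 ≤ P j j := by
    intro j
    exact Finset.sum_nonneg fun t _ => mul_self_nonneg _
  have hPdiag_le_one : ∀ j, P j j ≤ 1 := by
    intro j
    have h1 : (P j j)^2 ≤ ∑ k, (P j k)^2 :=
      Finset.single_le_sum (f := fun k => (P j k)^2) (fun k _ => sq_nonneg _) (Finset.mem_univ j)
    rw [hProw j] at h1
    nlinarith [hPdiag_nonneg j]
  have hrowKer : ∀ j, ∑ k, A j k * P k j = 0 := by
    intro j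
    calc ∑ k, A j k * P k j = ∑ k, ∑ t, A j k * (v t k * v t j) := by
          refine Finset.sum_congr rfl fun k _ => ?_
          rw [Finset.mul_sum]
      _ = ∑ t, ∑ k, A j k * (v t k * v t j) := Finset.sum_comm
      _ = ∑ t, (∑ k, A j k * v t k) * v t j := by
          refine Finset.sum_congr rfl fun t _ => ?_
          rw [Finset.sum_mul]
          exact Finset.sum_congr rfl fun k _ => by ring
      _ = 0 := by
          refine Finset.sum_eq_zero fun t _ => ?_
          have h := congrFun (hv_ker t) j
          have h2 : ∑ k, A j k * v t k = 0 := by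
            simpa [Matrix.mulVec, dotProduct] using h
          rw [h2, zero_mul]
  -- trace inequality
  have htrace : (m' : ℝ) ≤ ∑ j, ∑ k, (if j = k then 0 else |A j k| * |P j k|) := by
    have h0 : ∑ j, ∑ k, A j k * P k j = 0 := Finset.sum_eq_zero fun j _ => hrowKer j
    have h2 : ∑ j, ∑ k, (if j = k then 0 else A j k * P k j) = -(m' : ℝ) := by
      calc ∑ j, ∑ k, (if j = k then 0 else A j k * P k j)
          = ∑ j, ((∑ k, A j k * P k j) - A j j * P j j) :=
            Finset.sum_congr rfl fun j _ => sum_ite_ne' (fun k => A j k * P k j) j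
        _ = ∑ j, ((∑ k, A j k * P k j) - P j j) := by
            refine Finset.sum_congr rfl fun j _ => ?_
            rw [hdiag j, one_mul]
        _ = (∑ j, ∑ k, A j k * P k j) - ∑ j, P j j := Finset.sum_sub_distrib _ _
        _ = -(m' : ℝ) := by rw [h0, hPdiag_sum]; ring
    have h4 : ∑ j, ∑ k, -(if j = k then 0 else A j k * P k j)
        ≤ ∑ j, ∑ k, (if j = k then 0 else |A j k| * |P j k|) := by
      refine Finset.sum_le_sum fun j _ => Finset.sum_le_sum fun k _ => ?_
      by_cases h : j = k
      · simp [h]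
      · simp only [if_neg h]
        calc -(A j k * P k j) ≤ |A j k * P k j| := neg_le_abs _
          _ = |A j k| * |P k j| := abs_mul _ _
          _ = |A j k| * |P j k| := by rw [hPsymm]
    have h5 : ∑ j, ∑ k, -(if j = k then 0 else A j k * P k j)
        = -∑ j, ∑ k, (if j = k then 0 else A j k * P k j) := by
      simp
    rw [h5, h2] at h4
    simpa using h4
  have hScast : ((N:ℝ) - d) = (m' : ℝ) := by
    rw [hK, Nat.cast_sub hdN]
  set S : ℝ := ∑ i, ∑ j, if i = j then 0 else |A i j| ^ p with hSdef
  rcases eq_or_lt_of_le hp1 with hp1e | hp1'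
  · -- p = 1
    have hhalf : ∀ j k, j ≠ k → |P j k| ≤ 1/2 := by
      intro j k hjk
      have hkj : k ≠ j := Ne.symm hjk
      have hpair : (P j k)^2 + (P j j)^2 ≤ ∑ k', (P j k')^2 := by
        rw [← Finset.sum_pair (f := fun k' => P j k' ^ 2) hkj]
        exact Finset.sum_le_sum_of_subset_of_nonneg (Finset.subset_univ _)
          (fun i _ _ => sq_nonneg _)
      rw [hProw j] at hpair
      nlinarith [abs_nonneg (P j k), sq_abs (P j k), hPdiag_nonneg j, hPdiag_le_one j,
        sq_nonneg (P j j - 1/2)]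
    have hS2 : 2 * (m' : ℝ) ≤ S := by
      have hstep : ∑ j, ∑ k, (if j = k then 0 else |A j k| * |P j k|)
          ≤ ∑ j, ∑ k, (if j = k then 0 else |A j k| * (1/2)) := by
        refine Finset.sum_le_sum fun j _ => Finset.sum_le_sum fun k _ => ?_
        by_cases h : j = k
        · simp [h]
        · simp only [if_neg h]
          exact mul_le_mul_of_nonneg_left (hhalf j k h) (abs_nonneg _)
      have hSrw : S = ∑ j, ∑ k, (if j = k then 0 else |A j k|) := by
        rw [hSdef]
        refine Finset.sum_congr rfl fun j _ => Finset.sum_congr rfl fun k _ => ?_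
        by_cases h : j = k
        · simp [h]
        · simp [h, ← hp1e]
      have h4 : ∑ j, ∑ k, (if j = k then 0 else |A j k| * (1/2))
          = (1/2) * ∑ j, ∑ k, (if j = k then 0 else |A j k|) := by
        rw [Finset.mul_sum]
        refine Finset.sum_congr rfl fun j _ => ?_
        rw [Finset.mul_sum]
        refine Finset.sum_congr rfl fun k _ => ?_
        by_cases h : j = k <;> simp [h] <;> ring
      have := htrace.trans (hstep.trans_eq h4)
      rw [← hSrw] at this
      linarith
    rw [← hp1e]
    norm_num
    calc 2 * ((N:ℝ) - d) = 2 * (m' : ℝ) := by rw [hScast]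
      _ ≤ S := hS2
  · -- 1 < p
    have hp0 : 0 < p := by linarith
    have h2p : 0 < 2 - p := by linarith
    have hpm1 : 0 < p - 1 := by linarith
    set q : ℝ := p / (p - 1) with hqdef
    have hq : q * (p - 1) = p := by rw [hqdef]; field_simp
    have hq2 : 2 < q := by
      rw [hqdef, lt_div_iff₀ hpm1]; linarith
    have hq0 : 0 < q := by linarith
    have hpq : p.HolderConjugate q := by
      rw [Real.holderConjugate_iff]
      constructor
      · exact hp1'
      · rw [hqdef]; field_simp; ring
    set c : ℝ := p ^ (p/2) * (2-p) ^ ((2-p)/2) with hcdef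
    have hcpos : 0 < c := by positivity
    set ε : ℝ := (2 / c) ^ (1/p) with hεdef
    have hεpos : 0 < ε := by positivity
    set β : ℝ := ((2-p)/2) ^ (q/2 - 1) * (p/2) ^ (q/2) with hβdef
    have hβpos : 0 < β := by positivity
    have hεβ : ε ^ q * β = 1 := eps_beta' hp1' hp2 hq
    set Q : ℝ := ∑ j, ∑ k, (if j = k then 0 else |P j k| ^ q) with hQdef
    -- Q bound
    have hQle : Q ≤ β * (m' : ℝ) := by
      have hrow : ∀ j, ∑ k, (if j = k then (0:ℝ) else |P j k| ^ q) ≤ β * P j j := by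
        intro j
        have e1 : ∀ k, (if j = k then (0:ℝ) else |P j k| ^ q)
            = (if j = k then 0 else (P j k)^2) ^ (q/2) := by
          intro k
          by_cases h : j = k
          · simp only [if_pos h]
            rw [Real.zero_rpow (by positivity : q/2 ≠ 0)]
          · simp only [if_neg h]
            rw [← sq_abs (P j k), ← Real.rpow_natCast |P j k| 2,
              ← Real.rpow_mul (abs_nonneg _)]
            norm_num
            congr 1
            ring
        have e2 : ∑ k, (if j = k then (0:ℝ) else (P j k)^2) ^ (q/2)
            ≤ (∑ k, (if j = k then (0:ℝ) else (P j k)^2)) ^ (q/2) := by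
          refine sum_rpow_le_rpow_sum' _ _ (fun k _ => ?_) (by linarith)
          by_cases h : j = k
          · simp [h]
          · simp [h, sq_nonneg]
        have e3 : ∑ k, (if j = k then (0:ℝ) else (P j k)^2) = P j j - (P j j)^2 := by
          rw [sum_ite_ne' (fun k => (P j k)^2) j, hProw j]
        have e4 : (P j j - (P j j)^2) ^ (q/2) ≤ β * P j j := by
          rw [show P j j - (P j j)^2 = P j j * (1 - P j j) by ring]
          exact key_scalar' hp1' hp2 hq (hPdiag_nonneg j) (hPdiag_le_one j)
        calc ∑ k, (if j = k then (0:ℝ) else |P j k| ^ q)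
            = ∑ k, (if j = k then (0:ℝ) else (P j k)^2) ^ (q/2) :=
              Finset.sum_congr rfl fun k _ => e1 k
          _ ≤ (∑ k, (if j = k then (0:ℝ) else (P j k)^2)) ^ (q/2) := e2
          _ = (P j j - (P j j)^2) ^ (q/2) := by rw [e3]
          _ ≤ β * P j j := e4
      calc Q ≤ ∑ j, β * P j j := Finset.sum_le_sum fun j _ => hrow j
        _ = β * ∑ j, P j j := by rw [Finset.mul_sum]
        _ = β * (m' : ℝ) := by rw [hPdiag_sum]
    -- Young
    have hterm : ∀ j k, (if j = k then (0:ℝ) else |A j k| * |P j k|)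
        ≤ (ε^p)⁻¹ * p⁻¹ * (if j = k then 0 else |A j k| ^ p)
          + ε^q * q⁻¹ * (if j = k then 0 else |P j k| ^ q) := by
      intro j k
      by_cases h : j = k
      · simp [h]
      · simp only [if_neg h]
        have hy := Real.young_inequality_of_nonneg
          (a := |A j k| * ε⁻¹) (b := ε * |P j k|) (by positivity) (by positivity) hpq
        have hab : (|A j k| * ε⁻¹) * (ε * |P j k|) = |A j k| * |P j k| := by
          field_simp
        have ha2 : (|A j k| * ε⁻¹) ^ p = |A j k|^p * (ε^p)⁻¹ := by
          rw [Real.mul_rpow (abs_nonneg _) (by positivity), Real.inv_rpow hεpos.le]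
        have hb2 : (ε * |P j k|) ^ q = ε^q * |P j k|^q := by
          rw [Real.mul_rpow hεpos.le (abs_nonneg _)]
        rw [hab, ha2, hb2] at hy
        calc |A j k| * |P j k| ≤ |A j k|^p * (ε^p)⁻¹ / p + ε^q * |P j k|^q / q := hy
          _ = (ε^p)⁻¹ * p⁻¹ * |A j k|^p + ε^q * q⁻¹ * |P j k|^q := by ring
    have hmain : (m' : ℝ) ≤ (ε^p)⁻¹ * p⁻¹ * S + ε^q * q⁻¹ * Q := by
      calc (m' : ℝ) ≤ ∑ j, ∑ k, (if j = k then 0 else |A j k| * |P j k|) := htrace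
        _ ≤ ∑ j, ∑ k, ((ε^p)⁻¹ * p⁻¹ * (if j = k then 0 else |A j k| ^ p)
              + ε^q * q⁻¹ * (if j = k then 0 else |P j k| ^ q)) :=
            Finset.sum_le_sum fun j _ => Finset.sum_le_sum fun k _ => hterm j k
        _ = (ε^p)⁻¹ * p⁻¹ * S + ε^q * q⁻¹ * Q := by
            rw [hSdef, hQdef, Finset.mul_sum, Finset.mul_sum, ← Finset.sum_add_distrib]
            refine Finset.sum_congr rfl fun j _ => ?_
            rw [Finset.mul_sum, Finset.mul_sum, ← Finset.sum_add_distrib]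
    have hεppos : 0 < ε ^ p := Real.rpow_pos_of_pos hεpos p
    have hQ2 : ε^q * q⁻¹ * Q ≤ q⁻¹ * (m' : ℝ) := by
      have h5 : ε^q * Q ≤ ε^q * (β * (m':ℝ)) := by
        apply mul_le_mul_of_nonneg_left hQle (by positivity)
      calc ε^q * q⁻¹ * Q = q⁻¹ * (ε^q * Q) := by ring
        _ ≤ q⁻¹ * (ε^q * (β * (m':ℝ))) := by
            apply mul_le_mul_of_nonneg_left h5 (by positivity)
        _ = q⁻¹ * ((ε^q * β) * (m':ℝ)) := by ring
        _ = q⁻¹ * (m' : ℝ) := by rw [hεβ, one_mul]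
    have hfrac : 1 - q⁻¹ = p⁻¹ := by
      rw [← hpq.inv_add_inv_eq_one]; ring
    have hpne : p ≠ 0 := ne_of_gt hp0
    have hεpne : ε^p ≠ 0 := ne_of_gt hεppos
    have h6 : (m' : ℝ) * (1 - q⁻¹) ≤ (ε^p)⁻¹ * p⁻¹ * S := by
      linarith [hmain, hQ2]
    rw [hfrac] at h6
    have hSfin : ε^p * (m' : ℝ) ≤ S := by
      have h7 := mul_le_mul_of_nonneg_left h6 (le_of_lt (mul_pos hp0 hεppos))
      calc ε^p * (m' : ℝ) = (p * ε^p) * ((m':ℝ) * p⁻¹) := by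
            rw [show (p * ε^p) * ((m':ℝ) * p⁻¹) = (p * p⁻¹) * (ε^p * (m':ℝ)) by ring,
              mul_inv_cancel₀ hpne, one_mul]
          _ ≤ (p * ε^p) * ((ε^p)⁻¹ * p⁻¹ * S) := h7
          _ = S := by
            rw [show (p * ε^p) * ((ε^p)⁻¹ * p⁻¹ * S) = (p * p⁻¹) * ((ε^p) * (ε^p)⁻¹) * S by ring,
              mul_inv_cancel₀ hpne, mul_inv_cancel₀ hεpne]
            ring
    have hεp2c : ε^p = 2 / c := by
      rw [hεdef, ← Real.rpow_mul (by positivity), one_div,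
        inv_mul_cancel₀ (ne_of_gt hp0), Real.rpow_one]
    calc 2 * ((N:ℝ) - d) / c = ε^p * (m' : ℝ) := by
          rw [hScast, hεp2c]; ring
      _ ≤ S := hSfin
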